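/- For every T ≥ 1, every μ-strongly convex family (f_t)_{t=1}^T with minimizers x⋆_t over a closed convex set X containing 0, the optimal offline cost for OCO with quadratic switching cost is lower bounded: min over (x_t) in X of ∑_{t=1}^T [f_t(x_t) + (1/2)‖x_t - x_{t-1}‖²] ≥ ∑_{t=1}^T f_t(x⋆_t) + (μ/(2(μ+4)))(∑_{t=2}^T ‖x⋆_t - x⋆_{t-1}‖² + ‖x⋆_1‖²), where x_0 = 0. -/

import Mathlib

/-- Numeric key inequality. -/
lemma keynum (μ a a' b δ : ℝ) (hμ : 0 < μ) (ha : 0 ≤ a) (ha' : 0 ≤ a') (hb : 0 ≤ b)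
    (hδ : 0 ≤ δ) (h : δ ≤ a + b + a') :
    μ / (2 * (μ + 4)) * δ ^ 2 ≤ μ / 4 * a ^ 2 + μ / 4 * a' ^ 2 + 1 / 2 * b ^ 2 := by
  have h4 : (0:ℝ) < μ + 4 := by linarith
  have hc : 0 ≤ μ / (2 * (μ + 4)) := by positivity
  have hδ2 : δ ^ 2 ≤ (a + b + a') ^ 2 := by nlinarith
  calc μ / (2 * (μ + 4)) * δ ^ 2 ≤ μ / (2 * (μ + 4)) * (a + b + a') ^ 2 :=
        mul_le_mul_of_nonneg_left hδ2 hc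
    _ ≤ μ / 4 * a ^ 2 + μ / 4 * a' ^ 2 + 1 / 2 * b ^ 2 := by
        rw [div_mul_eq_mul_div, div_le_iff₀ (by linarith)]
        nlinarith [sq_nonneg (4 * b - μ * (a + a')), mul_nonneg hμ.le (sq_nonneg (a - a')),
          mul_nonneg (mul_nonneg hμ.le hμ.le) (sq_nonneg (a - a'))]

/-- Strong convexity + minimality over a convex set gives quadratic growth. -/
lemma strong_min {d : ℕ} (μ : ℝ) (hμ : 0 < μ) (X : Set (EuclideanSpace ℝ (Fin d)))
    (hXconvex : Convex ℝ X)
    (f : EuclideanSpace ℝ (Fin d) → ℝ) (g : EuclideanSpace ℝ (Fin d) → EuclideanSpace ℝ (Fin d))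
    (hsc : ∀ x ∈ X, ∀ y ∈ X, f x + (inner ℝ (g x) (y - x) : ℝ) + μ / 2 * ‖y - x‖ ^ 2 ≤ f y)
    (xs : EuclideanSpace ℝ (Fin d)) (hxs : xs ∈ X) (hmin : ∀ x ∈ X, f xs ≤ f x)
    (y : EuclideanSpace ℝ (Fin d)) (hy : y ∈ X) :
    f xs + μ / 2 * ‖y - xs‖ ^ 2 ≤ f y := by
  rcases eq_or_ne y xs with rfl | hne
  · simp
  refine le_of_forall_pos_le_add ?_
  intro ε hε
  have hDpos : 0 < ‖y - xs‖ ^ 2 := by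
    have h : y - xs ≠ 0 := sub_ne_zero.mpr hne
    exact pow_pos (norm_pos_iff.mpr h) 2
  set D := ‖y - xs‖ ^ 2 with hD
  set l := min (1/2 : ℝ) (2 * ε / (μ * D)) with hl
  have hl0 : 0 < l := lt_min (by norm_num) (div_pos (by linarith) (mul_pos hμ hDpos))
  have hl1 : l ≤ 1/2 := min_le_left _ _
  have hlε : l * (μ * D) ≤ 2 * ε := by
    have h' : l ≤ 2 * ε / (μ * D) := min_le_right _ _
    rw [le_div_iff₀ (by positivity)] at h'
    exact h'
  set z := xs + l • (y - xs) with hz'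
  have hz : z ∈ X := by
    rw [show z = (1 - l) • xs + l • y from by rw [hz']; module]
    exact hXconvex hxs hy (by linarith) hl0.le (by ring)
  have h1 := hsc z hz xs hxs
  have h2 := hsc z hz y hy
  have hm := hmin z hz
  have e1 : xs - z = (-l) • (y - xs) := by rw [hz']; module
  have e2 : y - z = (1 - l) • (y - xs) := by rw [hz']; module
  rw [e1, inner_smul_right, norm_smul] at h1
  rw [e2, inner_smul_right, norm_smul] at h2
  simp only [Real.norm_eq_abs, mul_pow, sq_abs, neg_sq, ← hD] at h1 h2
  have key : l * (f xs + μ / 2 * D - f y) ≤ l * ε := by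
    nlinarith [mul_le_mul_of_nonneg_left h1 (by linarith : (0:ℝ) ≤ 1 - l),
      mul_le_mul_of_nonneg_left h2 hl0.le,
      mul_le_mul_of_nonneg_left hlε hl0.le, hm, hDpos, hl0]
  have := le_of_mul_le_mul_left key hl0
  linarith

theorem opt_cost_lower_bound_quadratic
    (d T : ℕ) (hT : 1 ≤ T) (μ : ℝ) (hμ : 0 < μ)
    (X : Set (EuclideanSpace ℝ (Fin d)))
    (hXclosed : IsClosed X) (hXconvex : Convex ℝ X) (hX0 : (0 : EuclideanSpace ℝ (Fin d)) ∈ X)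
    (f : ℕ → EuclideanSpace ℝ (Fin d) → ℝ)
    (g : ℕ → EuclideanSpace ℝ (Fin d) → EuclideanSpace ℝ (Fin d))
    (hfnonneg : ∀ t, 1 ≤ t → t ≤ T → ∀ x ∈ X, 0 ≤ f t x)
    (hsc : ∀ t, 1 ≤ t → t ≤ T → ∀ x ∈ X, ∀ y ∈ X,
      f t x + (inner ℝ (g t x) (y - x) : ℝ) + μ / 2 * ‖y - x‖ ^ 2 ≤ f t y)
    (xstar : ℕ → EuclideanSpace ℝ (Fin d))
    (hxstarX : ∀ t, 1 ≤ t → t ≤ T → xstar t ∈ X)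
    (hmin : ∀ t, 1 ≤ t → t ≤ T → ∀ x ∈ X, f t (xstar t) ≤ f t x) :
    ∀ x : ℕ → EuclideanSpace ℝ (Fin d), x 0 = 0 → (∀ t, 1 ≤ t → t ≤ T → x t ∈ X) →
      ∑ t ∈ Finset.Icc 1 T, f t (xstar t)
        + μ / (2 * (μ + 4)) *
            (∑ t ∈ Finset.Icc 2 T, ‖xstar t - xstar (t - 1)‖ ^ 2 + ‖xstar 1‖ ^ 2) ≤
      ∑ t ∈ Finset.Icc 1 T, (f t (x t) + 1 / 2 * ‖x t - x (t - 1)‖ ^ 2) := by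
  intro x hx0 hxX
  set c := μ / (2 * (μ + 4)) with hc'
  set a : ℕ → ℝ := fun t => if t = 0 then 0 else ‖x t - xstar t‖ with ha'
  set D : ℕ → ℝ := fun t => ‖xstar t - (if t = 1 then 0 else xstar (t - 1))‖ ^ 2 with hD'
  have ha0 : a 0 = 0 := by simp [ha']
  have haS : ∀ t, 1 ≤ t → a t = ‖x t - xstar t‖ := by
    intro t ht; simp [ha', Nat.one_le_iff_ne_zero.mp ht]
  -- quadratic growth
  have hA : ∀ t ∈ Finset.Icc 1 T,
      f t (xstar t) + μ / 2 * (a t) ^ 2 + 1 / 2 * ‖x t - x (t - 1)‖ ^ 2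
        ≤ f t (x t) + 1 / 2 * ‖x t - x (t - 1)‖ ^ 2 := by
    intro t ht
    rw [Finset.mem_Icc] at ht
    rw [haS t ht.1]
    have := strong_min μ hμ X hXconvex (f t) (g t)
      (fun u hu v hv => hsc t ht.1 ht.2 u hu v hv) (xstar t) (hxstarX t ht.1 ht.2)
      (hmin t ht.1 ht.2) (x t) (hxX t ht.1 ht.2)
    linarith
  -- triangle inequality per step
  have htri : ∀ t, 1 ≤ t → t ≤ T →
      ‖xstar t - (if t = 1 then 0 else xstar (t - 1))‖ ≤ a t + ‖x t - x (t - 1)‖ + a (t - 1) := by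
    intro t h1 h2
    rcases eq_or_lt_of_le h1 with h | h
    · obtain rfl : t = 1 := h.symm
      simp only [if_pos rfl]
      have e : xstar 1 - 0 = (xstar 1 - x 1) + (x 1 - x 0) := by rw [hx0]; abel
      calc ‖xstar 1 - 0‖ ≤ ‖xstar 1 - x 1‖ + ‖x 1 - x 0‖ := by rw [e]; exact norm_add_le _ _
        _ ≤ a 1 + ‖x 1 - x 0‖ + a 0 := by
            rw [norm_sub_rev, haS 1 le_rfl, ha0]; norm_num
    · rw [if_neg (by omega)]
      have e : xstar t - xstar (t - 1) =
          (xstar t - x t) + (x t - x (t - 1)) + (x (t - 1) - xstar (t - 1)) := by abel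
      calc ‖xstar t - xstar (t - 1)‖
          ≤ ‖xstar t - x t‖ + ‖x t - x (t - 1)‖ + ‖x (t - 1) - xstar (t - 1)‖ := by
            rw [e]; exact norm_add₃_le
        _ = a t + ‖x t - x (t - 1)‖ + a (t - 1) := by
            rw [norm_sub_rev (xstar t), haS t h1, haS (t - 1) (by omega)]
  -- per-step bound on D
  have hstep : ∀ t ∈ Finset.Icc 1 T,
      c * D t ≤ μ / 4 * (a t) ^ 2 + μ / 4 * (a (t - 1)) ^ 2 + 1 / 2 * ‖x t - x (t - 1)‖ ^ 2 := by
    intro t ht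
    rw [Finset.mem_Icc] at ht
    have ht1 := ht.1
    have hat : 0 ≤ a t := by rw [haS t ht1]; positivity
    have hat' : 0 ≤ a (t - 1) := by
      rcases Nat.eq_zero_or_pos (t - 1) with h | h
      · rw [h, ha0]
      · rw [haS (t - 1) h]; positivity
    exact keynum μ (a t) (a (t - 1)) ‖x t - x (t - 1)‖
      ‖xstar t - (if t = 1 then 0 else xstar (t - 1))‖ hμ hat hat' (norm_nonneg _)
      (norm_nonneg _) (htri t ht.1 ht.2)
  -- telescoping
  have tel : ∀ n : ℕ, ∑ t ∈ Finset.Icc 1 n, ((a t) ^ 2 - (a (t - 1)) ^ 2)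
      = (a n) ^ 2 - (a 0) ^ 2 := by
    intro n
    induction n with
    | zero => simp
    | succ k ih =>
      rw [Finset.sum_Icc_succ_top (Nat.succ_le_succ (Nat.zero_le k)), ih]
      simp only [Nat.add_sub_cancel]
      ring
  have S2 : ∑ t ∈ Finset.Icc 1 T, μ / 4 * (a (t - 1)) ^ 2
      ≤ ∑ t ∈ Finset.Icc 1 T, μ / 4 * (a t) ^ 2 := by
    have h := tel T
    rw [Finset.sum_sub_distrib, ha0] at h
    have h2 : ∑ t ∈ Finset.Icc 1 T, (a (t - 1)) ^ 2 ≤ ∑ t ∈ Finset.Icc 1 T, (a t) ^ 2 := by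
      nlinarith [sq_nonneg (a T)]
    rw [← Finset.mul_sum, ← Finset.mul_sum]
    have : (0:ℝ) ≤ μ / 4 := by positivity
    exact mul_le_mul_of_nonneg_left h2 this
  -- sum splitting for D
  have es : Finset.Icc 1 T = insert 1 (Finset.Icc 2 T) := by
    ext n; simp only [Finset.mem_Icc, Finset.mem_insert]; omega
  have hDsum : ∑ t ∈ Finset.Icc 2 T, ‖xstar t - xstar (t - 1)‖ ^ 2 + ‖xstar 1‖ ^ 2
      = ∑ t ∈ Finset.Icc 1 T, D t := by
    rw [es, Finset.sum_insert (by simp)]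
    have hD1 : D 1 = ‖xstar 1‖ ^ 2 := by simp [hD']
    have hDt : ∑ t ∈ Finset.Icc 2 T, D t = ∑ t ∈ Finset.Icc 2 T, ‖xstar t - xstar (t - 1)‖ ^ 2 := by
      refine Finset.sum_congr rfl fun t ht => ?_
      rw [Finset.mem_Icc] at ht
      simp only [hD', if_neg (by omega : ¬ t = 1)]
    rw [hD1, hDt]; ring
  -- assemble
  have main : c * ∑ t ∈ Finset.Icc 1 T, D t
      ≤ ∑ t ∈ Finset.Icc 1 T, (μ / 2 * (a t) ^ 2 + 1 / 2 * ‖x t - x (t - 1)‖ ^ 2) := by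
    rw [Finset.mul_sum]
    calc ∑ t ∈ Finset.Icc 1 T, c * D t
        ≤ ∑ t ∈ Finset.Icc 1 T,
            (μ / 4 * (a t) ^ 2 + μ / 4 * (a (t - 1)) ^ 2 + 1 / 2 * ‖x t - x (t - 1)‖ ^ 2) :=
          Finset.sum_le_sum hstep
      _ ≤ ∑ t ∈ Finset.Icc 1 T, (μ / 2 * (a t) ^ 2 + 1 / 2 * ‖x t - x (t - 1)‖ ^ 2) := by
          simp only [Finset.sum_add_distrib]
          have e : ∑ t ∈ Finset.Icc 1 T, μ / 2 * (a t) ^ 2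
              = ∑ t ∈ Finset.Icc 1 T, μ / 4 * (a t) ^ 2
                + ∑ t ∈ Finset.Icc 1 T, μ / 4 * (a t) ^ 2 := by
            rw [← Finset.sum_add_distrib]
            exact Finset.sum_congr rfl fun t _ => by ring
          linarith [S2]
  have final : ∑ t ∈ Finset.Icc 1 T, f t (xstar t)
      + ∑ t ∈ Finset.Icc 1 T, (μ / 2 * (a t) ^ 2 + 1 / 2 * ‖x t - x (t - 1)‖ ^ 2)
      ≤ ∑ t ∈ Finset.Icc 1 T, (f t (x t) + 1 / 2 * ‖x t - x (t - 1)‖ ^ 2) := by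
    rw [← Finset.sum_add_distrib]
    refine Finset.sum_le_sum fun t ht => ?_
    have := hA t ht
    linarith
  rw [hDsum]
  linarith [main, final]
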